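/- Let A be an (n+1)×n real matrix of full column rank and B with ‖B A^†‖ ≤ C < 1, and set M := A + B. Then the Gram determinant satisfies (1−C)^{2n} det(AᵀA) ≤ det(MᵀM) ≤ (1+C)^{2n} det(AᵀA). -/

import Mathlib

open Matrix

/-- The (Euclidean) operator norm of a real matrix. -/
noncomputable def opNorm {m n : ℕ} (A : Matrix (Fin m) (Fin n) ℝ) : ℝ :=
  ‖(Matrix.toEuclideanLin A).toContinuousLinearMap‖

namespace PerturbAux

lemma psd_det_nonneg {k : ℕ} {P : Matrix (Fin k) (Fin k) ℝ} (hP : P.PosSemidef) :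
    0 ≤ P.det := by
  rw [hP.isHermitian.det_eq_prod_eigenvalues]
  exact Finset.prod_nonneg fun i _ => by exact_mod_cast hP.eigenvalues_nonneg i

lemma one_le_det_one_add {k : ℕ} {N : Matrix (Fin k) (Fin k) ℝ} (hN : N.PosSemidef) :
    1 ≤ (1 + N).det := by
  classical
  have h := hN.isHermitian
  set U : Matrix (Fin k) (Fin k) ℝ := (h.eigenvectorUnitary : Matrix (Fin k) (Fin k) ℝ) with hUdef
  have hU : U * star U = 1 := Matrix.mem_unitaryGroup_iff.mp h.eigenvectorUnitary.2
  have hsp : N = U * Matrix.diagonal (RCLike.ofReal ∘ h.eigenvalues) * star U :=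
    h.spectral_theorem
  have key : (1 : Matrix (Fin k) (Fin k) ℝ) + N
      = U * (1 + Matrix.diagonal (RCLike.ofReal ∘ h.eigenvalues)) * star U := by
    rw [mul_add, mul_one, add_mul, hU, ← hsp]
  have hD : (1 : Matrix (Fin k) (Fin k) ℝ) + Matrix.diagonal (RCLike.ofReal ∘ h.eigenvalues)
      = Matrix.diagonal (fun i => 1 + h.eigenvalues i) := by
    rw [← Matrix.diagonal_one, Matrix.diagonal_add]
    congr 1
  have h1 : U.det * (star U).det = 1 := by rw [← Matrix.det_mul, hU, Matrix.det_one]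
  have h2 : (1 : ℝ) ≤ (Matrix.diagonal (fun i => 1 + h.eigenvalues i)).det := by
    rw [Matrix.det_diagonal]
    have := Finset.prod_le_prod (s := Finset.univ) (f := fun _ : Fin k => (1 : ℝ))
      (g := fun i => 1 + h.eigenvalues i) (fun i _ => zero_le_one)
      (fun i _ => by have := hN.eigenvalues_nonneg i; linarith)
    simpa using this
  have h3 : (1 + N).det
      = U.det * (Matrix.diagonal (fun i => 1 + h.eigenvalues i)).det * (star U).det := by
    rw [key, hD, Matrix.det_mul, Matrix.det_mul]
  rw [h3, mul_comm U.det, mul_assoc, h1, mul_one]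
  exact h2

open scoped MatrixOrder in
lemma det_mono {k : ℕ} {P Q : Matrix (Fin k) (Fin k) ℝ} (hP : P.PosSemidef)
    (hQP : (Q - P).PosSemidef) : P.det ≤ Q.det := by
  classical
  have hQ : Q.PosSemidef := by
    have := hP.add hQP
    rwa [add_sub_cancel] at this
  rcases (psd_det_nonneg hP).eq_or_lt with h0 | hpos
  · rw [← h0]; exact psd_det_nonneg hQ
  · set S := CFC.sqrt P with hSdef
    have hSS : S * S = P := CFC.sqrt_mul_sqrt_self P hP.nonneg
    have hSh : S.IsHermitian := (Matrix.nonneg_iff_posSemidef.mp (CFC.sqrt_nonneg P)).isHermitian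
    have hdS : S.det * S.det = P.det := by rw [← Matrix.det_mul, hSS]
    have hdet : IsUnit S.det := by
      refine isUnit_iff_ne_zero.mpr fun h => ?_
      rw [h, mul_zero] at hdS
      linarith
    have hinvH : (S⁻¹)ᴴ = S⁻¹ := by rw [Matrix.conjTranspose_nonsing_inv, hSh.eq]
    have hN : (S⁻¹ * (Q - P) * S⁻¹).PosSemidef := by
      have := hQP.mul_mul_conjTranspose_same S⁻¹
      rwa [hinvH] at this
    have hmid : S * (S⁻¹ * (Q - P) * S⁻¹) * S = Q - P := by
      rw [← Matrix.mul_assoc, ← Matrix.mul_assoc, Matrix.mul_nonsing_inv S hdet, one_mul,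
        Matrix.mul_assoc, Matrix.nonsing_inv_mul S hdet, mul_one]
    have key : Q = S * (1 + S⁻¹ * (Q - P) * S⁻¹) * S := by
      rw [mul_add, mul_one, add_mul, hmid, hSS, add_sub_cancel]
    have hdetQ : Q.det = P.det * (1 + S⁻¹ * (Q - P) * S⁻¹).det := by
      conv_lhs => rw [key]
      rw [Matrix.det_mul, Matrix.det_mul, mul_right_comm, hdS]
    rw [hdetQ]
    exact le_mul_of_one_le_right hpos.le (one_le_det_one_add hN)

lemma euclid_norm {m : ℕ} (y : Fin m → ℝ) :
    ‖(WithLp.equiv 2 (Fin m → ℝ)).symm y‖ = Real.sqrt (∑ i, y i ^ 2) := by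
  rw [EuclideanSpace.norm_eq]
  congr 1
  refine Finset.sum_congr rfl fun i _ => ?_
  simp [Real.norm_eq_abs, sq_abs]

lemma euclid_norm_sq {m : ℕ} (y : Fin m → ℝ) :
    ‖(WithLp.equiv 2 (Fin m → ℝ)).symm y‖ ^ 2 = y ⬝ᵥ y := by
  rw [euclid_norm, Real.sq_sqrt (Finset.sum_nonneg fun i _ => sq_nonneg _)]
  simp [dotProduct, sq]

lemma mulVec_norm_le {m k : ℕ} (E : Matrix (Fin m) (Fin k) ℝ) (x : Fin k → ℝ) :
    ‖(WithLp.equiv 2 (Fin m → ℝ)).symm (E *ᵥ x)‖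
      ≤ opNorm E * ‖(WithLp.equiv 2 (Fin k → ℝ)).symm x‖ := by
  have h := (Matrix.toEuclideanLin E).toContinuousLinearMap.le_opNorm
    ((WithLp.equiv 2 (Fin k → ℝ)).symm x)
  simpa [opNorm] using h

lemma sandwich {m : ℕ} (E : Matrix (Fin m) (Fin m) ℝ) {C : ℝ}
    (hE : opNorm E ≤ C) (hC : C < 1) :
    (((1 : Matrix (Fin m) (Fin m) ℝ) + E)ᵀ * (1 + E) - (1 - C) ^ 2 • 1).PosSemidef ∧
      ((1 + C) ^ 2 • (1 : Matrix (Fin m) (Fin m) ℝ) - (1 + E)ᵀ * (1 + E)).PosSemidef := by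
  have h0 : (0 : ℝ) ≤ opNorm E := by unfold opNorm; exact norm_nonneg _
  have h0C : 0 ≤ C := h0.trans hE
  have hFh : (((1 : Matrix (Fin m) (Fin m) ℝ) + E)ᵀ * (1 + E)).IsHermitian := by
    rw [← Matrix.conjTranspose_eq_transpose_of_trivial]
    exact Matrix.isHermitian_conjTranspose_mul_self _
  have hsmul : ∀ c : ℝ, ((c • 1 : Matrix (Fin m) (Fin m) ℝ)).IsHermitian := fun c => by
    simp [Matrix.IsHermitian]
  -- main quadratic estimate
  have quad : ∀ x : Fin m → ℝ,
      (1 - C) ^ 2 * (x ⬝ᵥ x) ≤ ((1 + E) *ᵥ x) ⬝ᵥ ((1 + E) *ᵥ x) ∧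
      ((1 + E) *ᵥ x) ⬝ᵥ ((1 + E) *ᵥ x) ≤ (1 + C) ^ 2 * (x ⬝ᵥ x) := by
    intro x
    set x' := (WithLp.equiv 2 (Fin m → ℝ)).symm x with hx'
    set e := (WithLp.equiv 2 (Fin m → ℝ)).symm (E *ᵥ x) with he
    have hy : (WithLp.equiv 2 (Fin m → ℝ)).symm ((1 + E) *ᵥ x) = x' + e := by
      rw [Matrix.add_mulVec, Matrix.one_mulVec]
      exact WithLp.toLp_add _ _ _
    have hEb : ‖e‖ ≤ C * ‖x'‖ :=
      (mulVec_norm_le E x).trans (by nlinarith [norm_nonneg x'])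
    have hub : ‖x' + e‖ ≤ (1 + C) * ‖x'‖ := by
      have := norm_add_le x' e
      nlinarith
    have hlb : (1 - C) * ‖x'‖ ≤ ‖x' + e‖ := by
      have h1 : ‖x'‖ ≤ ‖x' + e‖ + ‖e‖ := by
        calc ‖x'‖ = ‖(x' + e) - e‖ := by rw [add_sub_cancel_right]
        _ ≤ ‖x' + e‖ + ‖e‖ := norm_sub_le _ _
      nlinarith
    have hxx : x ⬝ᵥ x = ‖x'‖ ^ 2 := (euclid_norm_sq x).symm
    have hyy : ((1 + E) *ᵥ x) ⬝ᵥ ((1 + E) *ᵥ x) = ‖x' + e‖ ^ 2 := by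
      rw [← hy]; exact (euclid_norm_sq _).symm
    constructor
    · rw [hxx, hyy]
      have hnn : 0 ≤ (1 - C) * ‖x'‖ := mul_nonneg (by linarith) (norm_nonneg _)
      have := pow_le_pow_left₀ hnn hlb 2
      nlinarith
    · rw [hxx, hyy]
      have := pow_le_pow_left₀ (norm_nonneg (x' + e)) hub 2
      nlinarith
  have hquadform : ∀ x : Fin m → ℝ,
      x ⬝ᵥ ((((1 : Matrix (Fin m) (Fin m) ℝ) + E)ᵀ * (1 + E)) *ᵥ x)
        = ((1 + E) *ᵥ x) ⬝ᵥ ((1 + E) *ᵥ x) := by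
    intro x
    rw [← Matrix.mulVec_mulVec, Matrix.dotProduct_mulVec, Matrix.vecMul_transpose]
  have hsmulform : ∀ (c : ℝ) (x : Fin m → ℝ),
      x ⬝ᵥ ((c • (1 : Matrix (Fin m) (Fin m) ℝ)) *ᵥ x) = c * (x ⬝ᵥ x) := by
    intro c x
    rw [Matrix.smul_mulVec, Matrix.one_mulVec, dotProduct_smul, smul_eq_mul]
  constructor
  · refine Matrix.posSemidef_iff_dotProduct_mulVec.mpr ⟨hFh.sub (hsmul _), fun x => ?_⟩
    have := (quad x).1
    rw [star_trivial, Matrix.sub_mulVec, dotProduct_sub, hquadform, hsmulform]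
    linarith
  · refine Matrix.posSemidef_iff_dotProduct_mulVec.mpr ⟨(hsmul _).sub hFh, fun x => ?_⟩
    have := (quad x).2
    rw [star_trivial, Matrix.sub_mulVec, dotProduct_sub, hquadform, hsmulform]
    linarith

end PerturbAux

open PerturbAux in
/-- If `A` is an `(n+1) × n` real matrix of full column rank, `B` satisfies
`‖B A†‖ ≤ C < 1` (with `A† = (AᵀA)⁻¹Aᵀ`), and `M := A + B`, then the Gram
determinant satisfies
`(1-C)^(2n) det(AᵀA) ≤ det(MᵀM) ≤ (1+C)^(2n) det(AᵀA)`. -/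
theorem perturbed_matrix_gram_determinant {n : ℕ}
    (A B : Matrix (Fin (n + 1)) (Fin n) ℝ) (C : ℝ)
    (hA : A.rank = n)
    (hBA : opNorm (B * ((Aᵀ * A)⁻¹ * Aᵀ)) ≤ C) (hC : C < 1) :
    (1 - C) ^ (2 * n) * (Aᵀ * A).det ≤ ((A + B)ᵀ * (A + B)).det ∧
      ((A + B)ᵀ * (A + B)).det ≤ (1 + C) ^ (2 * n) * (Aᵀ * A).det := by
  classical
  -- `A` has trivial kernel
  have hkerA : LinearMap.ker A.mulVecLin = ⊥ := by
    have h1 := A.mulVecLin.finrank_range_add_finrank_ker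
    rw [Matrix.rank] at hA
    rw [hA, Module.finrank_fin_fun] at h1
    have h2 : Module.finrank ℝ (LinearMap.ker A.mulVecLin) = 0 := by omega
    exact Submodule.finrank_eq_zero.mp h2
  -- `AᵀA` is positive definite
  have hPD : (Aᵀ * A).PosDef := by
    rw [Matrix.posDef_iff_dotProduct_mulVec]
    constructor
    · rw [← Matrix.conjTranspose_eq_transpose_of_trivial]
      exact Matrix.isHermitian_conjTranspose_mul_self _
    · intro x hx
      have hq : star x ⬝ᵥ ((Aᵀ * A) *ᵥ x) = (A *ᵥ x) ⬝ᵥ (A *ᵥ x) := by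
        rw [star_trivial, ← Matrix.mulVec_mulVec, Matrix.dotProduct_mulVec,
          Matrix.vecMul_transpose]
      have hAx : A *ᵥ x ≠ 0 := by
        intro h
        apply hx
        have hmem : x ∈ LinearMap.ker A.mulVecLin := by
          rw [LinearMap.mem_ker]; simpa using h
        rw [hkerA] at hmem
        simpa using hmem
      rw [hq]
      have hnn : 0 ≤ (A *ᵥ x) ⬝ᵥ (A *ᵥ x) :=
        Finset.sum_nonneg fun i _ => mul_self_nonneg _
      have hne : (A *ᵥ x) ⬝ᵥ (A *ᵥ x) ≠ 0 := fun h =>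
        hAx (dotProduct_self_eq_zero.mp h)
      exact hnn.lt_of_ne (Ne.symm hne)
  have hunit : IsUnit (Aᵀ * A).det := isUnit_iff_ne_zero.mpr hPD.det_pos.ne'
  set E := B * ((Aᵀ * A)⁻¹ * Aᵀ) with hEdef
  have hEA : E * A = B := by
    rw [hEdef, Matrix.mul_assoc, Matrix.mul_assoc, Matrix.nonsing_inv_mul _ hunit, Matrix.mul_one]
  have hM : A + B = (1 + E) * A := by
    rw [Matrix.add_mul, Matrix.one_mul, hEA]
  obtain ⟨hlo, hhi⟩ := sandwich E hBA hC
  have h0 : (0 : ℝ) ≤ opNorm E := by unfold opNorm; exact norm_nonneg _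
  have h0C : 0 ≤ C := h0.trans hBA
  have key1 : (A + B)ᵀ * (A + B) = Aᵀ * (((1 + E)ᵀ * (1 + E))) * A := by
    rw [hM, Matrix.transpose_mul]
    simp only [Matrix.mul_assoc]
  have hsc : ∀ c : ℝ, Aᵀ * (c • (1 : Matrix (Fin (n+1)) (Fin (n+1)) ℝ)) * A
      = c • (Aᵀ * A) := by
    intro c
    rw [Matrix.mul_smul, Matrix.mul_one, Matrix.smul_mul]
  have hdetsc : ∀ c : ℝ, ((c ^ 2) • (Aᵀ * A)).det = c ^ (2 * n) * (Aᵀ * A).det := by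
    intro c
    rw [Matrix.det_smul, Fintype.card_fin, ← pow_mul]
  have hAconj : ∀ S : Matrix (Fin (n+1)) (Fin (n+1)) ℝ, S.PosSemidef →
      (Aᵀ * S * A).PosSemidef := by
    intro S hS
    have := hS.conjTranspose_mul_mul_same A
    rwa [Matrix.conjTranspose_eq_transpose_of_trivial] at this
  constructor
  · -- lower bound
    have hP : ((1 - C) ^ 2 • (Aᵀ * A)).PosSemidef := by
      rw [← hsc]
      refine hAconj _ ?_
      rw [Matrix.smul_one_eq_diagonal]
      exact Matrix.PosSemidef.diagonal fun i => sq_nonneg _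
    have hsub : ((A + B)ᵀ * (A + B) - (1 - C) ^ 2 • (Aᵀ * A)).PosSemidef := by
      have heq : (A + B)ᵀ * (A + B) - (1 - C) ^ 2 • (Aᵀ * A)
          = Aᵀ * ((1 + E)ᵀ * (1 + E) - (1 - C) ^ 2 • 1) * A := by
        rw [Matrix.mul_sub, Matrix.sub_mul, hsc, key1]
      rw [heq]
      exact hAconj _ hlo
    have := det_mono hP hsub
    rwa [hdetsc] at this
  · -- upper bound
    have hP : (((A + B)ᵀ * (A + B))).PosSemidef := by
      have := Matrix.posSemidef_conjTranspose_mul_self (A + B)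
      rwa [Matrix.conjTranspose_eq_transpose_of_trivial] at this
    have hsub : ((1 + C) ^ 2 • (Aᵀ * A) - (A + B)ᵀ * (A + B)).PosSemidef := by
      have heq : (1 + C) ^ 2 • (Aᵀ * A) - (A + B)ᵀ * (A + B)
          = Aᵀ * ((1 + C) ^ 2 • 1 - (1 + E)ᵀ * (1 + E)) * A := by
        rw [Matrix.mul_sub, Matrix.sub_mul, hsc, key1]
      rw [heq]
      exact hAconj _ hhi
    have := det_mono hP hsub
    rwa [hdetsc] at this
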